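/- If G is a graph with γ_g(G) = 2γ(G) − 1 and H is a spanning subgraph of G with γ(H) = γ(G), then γ_g(H) ≤ γ_g(G). -/

import Mathlib

open Finset

namespace DomGame

variable {V : Type*} [Fintype V] [DecidableEq V]

/-- Closed neighborhood of `v` in `G`, as a `Finset`. -/
noncomputable def cn (G : SimpleGraph V) (v : V) : Finset V :=
  haveI : DecidablePred (fun u : V => u = v ∨ G.Adj v u) := fun _ => Classical.propDecidable _
  Finset.univ.filter (fun u : V => u = v ∨ G.Adj v u)

/-- Value (number of remaining moves, optimal play) of the domination game on `G`,
with fuel, where `D` is the set of already dominated vertices and `who = true`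
means Dominator is to move (minimizing); `who = false` means Staller (maximizing). -/
noncomputable def auxVal (G : SimpleGraph V) : ℕ → Bool → Finset V → ℕ
  | 0, _, _ => 0
  | n + 1, who, D =>
    if D = Finset.univ then 0
    else
      haveI : DecidablePred (fun v : V => ¬ cn G v ⊆ D) := fun _ => Classical.propDecidable _
      let moves : Finset V := Finset.univ.filter (fun v : V => ¬ cn G v ⊆ D)
      if who then
        WithTop.untopD 0 ((moves.image (fun v => 1 + auxVal G n false (D ∪ cn G v))).min)
      else
        moves.sup (fun v => 1 + auxVal G n true (D ∪ cn G v))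

/-- Remaining moves of the domination game on the partially dominated graph `(G, D)`,
Dominator to move, both players optimal. -/
noncomputable def gVal (G : SimpleGraph V) (D : Finset V) : ℕ :=
  auxVal G (Fintype.card V) true D

/-- Remaining moves, Staller to move. -/
noncomputable def gVal' (G : SimpleGraph V) (D : Finset V) : ℕ :=
  auxVal G (Fintype.card V) false D

/-- The game domination number (Dominator starts). -/
noncomputable def gammaG (G : SimpleGraph V) : ℕ := gVal G ∅

/-- The Staller-start game domination number. -/
noncomputable def gammaG' (G : SimpleGraph V) : ℕ := gVal' G ∅

/-- `S` is a dominating set of `G`. -/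
def IsDomSet (G : SimpleGraph V) (S : Finset V) : Prop :=
  ∀ v : V, ∃ u ∈ S, u = v ∨ G.Adj u v

/-- The domination number of `G`. -/
noncomputable def gamma (G : SimpleGraph V) : ℕ :=
  sInf {n | ∃ S : Finset V, IsDomSet G S ∧ S.card = n}


section Aux
set_option linter.unusedSectionVars false

lemma mem_cn (G : SimpleGraph V) (u v : V) : v ∈ cn G u ↔ (v = u ∨ G.Adj u v) := by
  simp [cn]

/-- The legal vertices of `S` given already-dominated set `D`. -/
noncomputable def legal (G : SimpleGraph V) (S D : Finset V) : Finset V :=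
  haveI : DecidablePred (fun s : V => ¬ cn G s ⊆ D) := fun _ => Classical.propDecidable _
  S.filter (fun s => ¬ cn G s ⊆ D)

lemma mem_legal {G : SimpleGraph V} {S D : Finset V} {s : V} :
    s ∈ legal G S D ↔ s ∈ S ∧ ¬ cn G s ⊆ D := by
  simp [legal]

lemma legal_nonempty {G : SimpleGraph V} {S D : Finset V} (hS : IsDomSet G S)
    (hD : D ≠ Finset.univ) : (legal G S D).Nonempty := by
  have : ∃ v, v ∉ D := by
    by_contra h
    push_neg at h
    exact hD (Finset.eq_univ_iff_forall.2 h)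
  obtain ⟨v, hv⟩ := this
  obtain ⟨u, huS, hu⟩ := hS v
  refine ⟨u, mem_legal.2 ⟨huS, fun hsub => hv (hsub ?_)⟩⟩
  rw [mem_cn]
  rcases hu with h | h
  · exact Or.inl h.symm
  · exact Or.inr h

lemma legal_mono {G : SimpleGraph V} {S D D' : Finset V} (h : D ⊆ D') :
    legal G S D' ⊆ legal G S D := by
  intro s hs
  rw [mem_legal] at hs ⊢
  exact ⟨hs.1, fun hsub => hs.2 (hsub.trans h)⟩

lemma legal_card_lt {G : SimpleGraph V} {S D : Finset V} {s : V} (hs : s ∈ legal G S D) :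
    (legal G S (D ∪ cn G s)).card + 1 ≤ (legal G S D).card := by
  have hsub : legal G S (D ∪ cn G s) ⊆ (legal G S D).erase s := by
    intro t ht
    rw [mem_legal] at ht
    refine Finset.mem_erase.2 ⟨?_, mem_legal.2 ⟨ht.1, fun h => ht.2 (h.trans Finset.subset_union_left)⟩⟩
    rintro rfl
    exact ht.2 Finset.subset_union_right
  calc (legal G S (D ∪ cn G s)).card + 1 ≤ ((legal G S D).erase s).card + 1 :=
        Nat.add_le_add_right (Finset.card_le_card hsub) 1
    _ ≤ (legal G S D).card := by
        rw [Finset.card_erase_of_mem hs]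
        have : 1 ≤ (legal G S D).card := Finset.card_pos.2 ⟨s, hs⟩
        omega

lemma untop'_min_le {t : Finset ℕ} {a : ℕ} (h : a ∈ t) : WithTop.untopD 0 t.min ≤ a := by
  have hle := Finset.min_le h
  cases hm : t.min with
  | top => rw [hm] at hle; exact absurd (top_le_iff.1 hle) (by simp)
  | coe m =>
    rw [hm] at hle
    rw [WithTop.untopD_coe]
    exact WithTop.coe_le_coe.1 hle

lemma key (G : SimpleGraph V) (S : Finset V) (hS : IsDomSet G S) :
    ∀ n D, auxVal G n true D ≤ 2 * (legal G S D).card - 1 ∧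
           auxVal G n false D ≤ 2 * (legal G S D).card := by
  intro n
  induction n with
  | zero => intro D; constructor <;> simp [auxVal]
  | succ n ih =>
    intro D
    by_cases hD : D = Finset.univ
    · constructor <;> simp [auxVal, hD]
    obtain ⟨s, hs⟩ := legal_nonempty hS hD
    have hk1 : 1 ≤ (legal G S D).card := Finset.card_pos.2 ⟨s, hs⟩
    constructor
    · rw [auxVal]
      simp only [hD, if_false, if_true]
      have hval : 1 + auxVal G n false (D ∪ cn G s) ≤ 2 * (legal G S D).card - 1 := by
        have h1 := (ih (D ∪ cn G s)).2
        have h2 := legal_card_lt hs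
        omega
      refine le_trans (untop'_min_le (Finset.mem_image_of_mem _ ?_)) hval
      exact (@Finset.mem_filter V _ (fun _ => Classical.propDecidable _) _ _).2
        ⟨Finset.mem_univ _, (mem_legal.1 hs).2⟩
    · rw [auxVal]
      simp only [hD, if_false, Bool.false_eq_true, if_false]
      apply Finset.sup_le
      intro v hv
      have h1 := (ih (D ∪ cn G v)).1
      have h2 : (legal G S (D ∪ cn G v)).card ≤ (legal G S D).card :=
        Finset.card_le_card (legal_mono Finset.subset_union_left)
      omega

lemma legal_empty (G : SimpleGraph V) (S : Finset V) : legal G S ∅ = S := by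
  ext s
  rw [mem_legal]
  simp only [and_iff_left_iff_imp]
  intro _ h
  exact absurd (h (by rw [mem_cn]; exact Or.inl rfl)) (by simp)

lemma exists_min_domset (G : SimpleGraph V) :
    ∃ S : Finset V, IsDomSet G S ∧ S.card = gamma G := by
  have hne : {n | ∃ S : Finset V, IsDomSet G S ∧ S.card = n}.Nonempty :=
    ⟨(Finset.univ : Finset V).card, Finset.univ, fun v => ⟨v, Finset.mem_univ _, Or.inl rfl⟩, rfl⟩
  obtain ⟨S, hS, hcard⟩ := Nat.sInf_mem hne
  exact ⟨S, hS, hcard⟩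

lemma gammaG_le (G : SimpleGraph V) : gammaG G ≤ 2 * gamma G - 1 := by
  obtain ⟨S, hS, hcard⟩ := exists_min_domset G
  have h := (key G S hS (Fintype.card V) ∅).1
  rwa [legal_empty, hcard] at h

end Aux

end DomGame

/-- if γ_g(G) = 2γ(G) − 1 and H is a spanning subgraph of G with
γ(H) = γ(G), then γ_g(H) ≤ γ_g(G). -/
theorem stmt13 {V : Type*} [Fintype V] [DecidableEq V] (G H : SimpleGraph V)
    (hHG : H ≤ G) (hG : DomGame.gammaG G = 2 * DomGame.gamma G - 1)
    (hdom : DomGame.gamma H = DomGame.gamma G) :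
    DomGame.gammaG H ≤ DomGame.gammaG G := by
  calc DomGame.gammaG H ≤ 2 * DomGame.gamma H - 1 := DomGame.gammaG_le H
    _ = 2 * DomGame.gamma G - 1 := by rw [hdom]
    _ = DomGame.gammaG G := hG.symm
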